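/- Let α satisfy φ < α < 2, where φ = (1 + √5)/2 is the golden ratio. Let A, B, C, a, b, k be positive integers such that k ≤ k₀(α) + 1 and (2^k·(2α − 1)/(α − 1))·C ≥ A + B + C. Then A·(d_α + c_α·log₂ a) + B·(d_α + c_α·log₂ b) + k·C + 2B + A ≤ A·(d_α − 1 + c_α·log₂ a) + (B + C)·(d_α − 1 + c_α·log₂(b + 1)). -/
import Mathlib


open Real

/-- The constant `c_α = (α+1)/((α+1)·log₂(α+1) − α·log₂ α)`. -/
noncomputable def cA (α : ℝ) : ℝ :=
  (α + 1) / ((α + 1) * logb 2 (α + 1) - α * logb 2 α)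

/-- `k₀(α)` is the least `ℓ ∈ ℕ` such that `(α² − α − 1)/(α − 1) ≥ α^(−ℓ)`. -/
noncomputable def k0 (α : ℝ) : ℕ :=
  sInf {ℓ : ℕ | (α ^ 2 - α - 1) / (α - 1) ≥ α ^ (-(ℓ : ℝ))}

/-- The constant `d_α = 2^(k₀(α)+1)·max{k₀(α)+1, 3}·(2α − 1)/(α − 1) + 1`. -/
noncomputable def dA (α : ℝ) : ℝ :=
  2 ^ (k0 α + 1) * max ((k0 α : ℝ) + 1) 3 * (2 * α - 1) / (α - 1) + 1

/-- Lemma 8 (for case (D)): for `φ < α < 2`, if `k ≤ k₀(α)+1` and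
`(2^k(2α−1)/(α−1))·C ≥ A + B + C`, then
`A·(d_α + c_α·log a) + B·(d_α + c_α·log b) + k·C + 2B + A
  ≤ A·(d_α − 1 + c_α·log a) + (B+C)·(d_α − 1 + c_α·log(b+1))`. -/
theorem alphamerge_CD (α : ℝ) (hφ : (1 + Real.sqrt 5) / 2 < α) (hα2 : α < 2)
    (A B C a b k : ℕ) (hA : 0 < A) (hB : 0 < B) (hC : 0 < C)
    (ha : 0 < a) (hb : 0 < b) (hk : 0 < k)
    (hk0 : k ≤ k0 α + 1)
    (h1 : (A : ℝ) + B + C ≤ 2 ^ k * (2 * α - 1) / (α - 1) * C) :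
    (A : ℝ) * (dA α + cA α * logb 2 a) + (B : ℝ) * (dA α + cA α * logb 2 b)
        + (k : ℝ) * C + 2 * B + A
      ≤ (A : ℝ) * (dA α - 1 + cA α * logb 2 a)
        + ((B : ℝ) + C) * (dA α - 1 + cA α * logb 2 ((b : ℝ) + 1)) := by
  have hs5 : (2:ℝ) < Real.sqrt 5 := by
    nlinarith [Real.sq_sqrt (by norm_num : (0:ℝ) ≤ 5), Real.sqrt_nonneg 5]
  have hα1 : (1:ℝ) < α := by nlinarith
  have hαm : (0:ℝ) < α - 1 := by linarith
  set R : ℝ := (2 * α - 1) / (α - 1) with hRdef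
  have hR2 : (2:ℝ) ≤ R := by rw [hRdef, le_div_iff₀ hαm]; linarith
  -- c ≥ 0
  have hc0 : 0 ≤ cA α := by
    rw [cA]
    apply div_nonneg (by linarith)
    have hl : logb 2 α ≤ logb 2 (α + 1) :=
      Real.logb_le_logb_of_le one_lt_two (by linarith) (by linarith)
    have h0 : 0 ≤ logb 2 α := Real.logb_nonneg one_lt_two (le_of_lt hα1)
    nlinarith [mul_le_mul (by linarith : α ≤ α + 1) hl h0 (by linarith : (0:ℝ) ≤ α + 1)]
  set c := cA α
  set d := dA α with hd_def
  set P : ℝ := 2 ^ (k0 α + 1) with hPdef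
  set M : ℝ := max ((k0 α : ℝ) + 1) 3 with hMdef
  have hd1 : d - 1 = P * M * R := by rw [hd_def, dA]; ring
  have hkm : (k:ℝ) ≤ (k0 α : ℝ) + 1 := by exact_mod_cast hk0
  have hpk : (2:ℝ) ^ k ≤ P := by
    rw [hPdef]; exact pow_le_pow_right₀ one_le_two hk0
  have hP1 : (1:ℝ) ≤ P := by
    rw [hPdef]; exact one_le_pow₀ one_le_two
  have hM3 : (3:ℝ) ≤ M := le_max_right _ _
  have hMm : (k0 α : ℝ) + 1 ≤ M := le_max_left _ _
  have key : (k:ℝ) + 3 * ((2:ℝ) ^ k * R) - 3 ≤ P * M * R := by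
    nlinarith [mul_nonneg (by linarith : (0:ℝ) ≤ M - 3)
        (by nlinarith : (0:ℝ) ≤ P * R - 1),
      mul_nonneg (by linarith : (0:ℝ) ≤ P - (2:ℝ) ^ k) (by linarith : (0:ℝ) ≤ R)]
  have hC0 : (0:ℝ) ≤ (C:ℝ) := Nat.cast_nonneg _
  have hA0 : (0:ℝ) ≤ (A:ℝ) := Nat.cast_nonneg _
  have h1' : (A:ℝ) + B + C ≤ (2:ℝ) ^ k * R * C := by
    rw [hRdef]; calc (A:ℝ) + B + C ≤ 2 ^ k * (2 * α - 1) / (α - 1) * C := h1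
      _ = 2 ^ k * ((2 * α - 1) / (α - 1)) * C := by ring
  have hstep := mul_le_mul_of_nonneg_left key hC0
  have h3 : 2 * (A:ℝ) + 3 * B ≤ (C:ℝ) * (d - 1 - (k:ℝ)) := by
    have hd1' : d - 1 - (k:ℝ) = P * M * R - (k:ℝ) := by rw [hd1]
    rw [hd1']
    linarith [hstep, h1', hA0]
  have hb1 : (1:ℝ) ≤ (b:ℝ) := by exact_mod_cast hb
  have hlb : logb 2 (b:ℝ) ≤ logb 2 ((b:ℝ) + 1) :=
    Real.logb_le_logb_of_le one_lt_two (by linarith) (by linarith)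
  have hlb0 : 0 ≤ logb 2 ((b:ℝ) + 1) := by
    exact Real.logb_nonneg one_lt_two (by linarith)
  have e1 : (B:ℝ) * (c * logb 2 (b:ℝ)) ≤ (B:ℝ) * (c * logb 2 ((b:ℝ) + 1)) :=
    mul_le_mul_of_nonneg_left (mul_le_mul_of_nonneg_left hlb hc0) (Nat.cast_nonneg _)
  have e2 : 0 ≤ (C:ℝ) * (c * logb 2 ((b:ℝ) + 1)) :=
    mul_nonneg hC0 (mul_nonneg hc0 hlb0)
  linarith [e1, e2, h3]
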